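/- Fix μ_max > 0. There exists a constant C > 0 such that for every μ ∈ [0, μ_max], every α ≥ 0, and every u ∈ H^{α+2}(ℝ), one has ‖(F_μ − 1)u‖_{H^α} ≤ C μ ‖u‖_{H^{α+2}}. -/

import Mathlib

open MeasureTheory Real
open scoped ENNReal FourierTransform

/-- Fourier transform of a real-valued function on ℝ (as a complex-valued function). -/
noncomputable def fourierC (u : ℝ → ℝ) : ℝ → ℂ :=
  (FourierTransform.fourier (fun x : ℝ => (u x : ℂ)) : ℝ → ℂ)

/-- Fourier multiplier with (real) symbol `G`, acting on real-valued functions. -/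
noncomputable def fourierMul (G : ℝ → ℝ) (u : ℝ → ℝ) : ℝ → ℝ :=
  fun x => ((FourierTransformInv.fourierInv (fun ξ : ℝ => (G ξ : ℂ) * fourierC u ξ) : ℝ → ℂ) x).re

/-- The `H^α(ℝ)` Sobolev norm, `‖(1+ξ²)^{α/2} û‖_{L²}`. -/
noncomputable def HNorm (α : ℝ) (u : ℝ → ℝ) : ℝ≥0∞ :=
  eLpNorm (fun ξ : ℝ => (1 + ξ ^ 2) ^ (α / 2) * ‖fourierC u ξ‖) 2 volume

/-- The symbol `F_μ(ξ) = sqrt(tanh(√μ|ξ|)/(√μ|ξ|))`. -/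
noncomputable def Fsymb (μ : ℝ) (ξ : ℝ) : ℝ :=
  if μ = 0 ∨ ξ = 0 then 1 else Real.sqrt (Real.tanh (Real.sqrt μ * |ξ|) / (Real.sqrt μ * |ξ|))

/-- The symbol of `F_μ⁻¹`. -/
noncomputable def FsymbInv (μ : ℝ) (ξ : ℝ) : ℝ :=
  if μ = 0 ∨ ξ = 0 then 1 else Real.sqrt ((Real.sqrt μ * |ξ|) / Real.tanh (Real.sqrt μ * |ξ|))

/-- Time derivative of a time-dependent function. -/
noncomputable def tderiv (u : ℝ → ℝ → ℝ) (t x : ℝ) : ℝ :=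
  deriv (fun τ => u τ x) t

/-- The `W^{α,1}(ℝ)` norm for integer `α`. -/
noncomputable def WNorm (α : ℕ) (u : ℝ → ℝ) : ℝ≥0∞ :=
  ∑ k ∈ Finset.range (α + 1), eLpNorm (iteratedDeriv k u) 1 volume

/-- Membership in `W^{α,1}(ℝ)` (with a smooth-representative convention). -/
def MemW (α : ℕ) (u : ℝ → ℝ) : Prop :=
  ContDiff ℝ (α : ℕ∞) u ∧ ∀ k ≤ α, MeasureTheory.Integrable (iteratedDeriv k u)

/-- The antiderivative operator `∂⁻¹u(x) = (1/2)∫ sgn(x−y)u(y)dy`. -/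
noncomputable def pinv (u : ℝ → ℝ) : ℝ → ℝ :=
  fun x => (1 / 2) * ∫ y, Real.sign (x - y) * u y

lemma myHasDerivAt_tanh (x : ℝ) : HasDerivAt Real.tanh (1 / Real.cosh x ^ 2) x := by
  have h := (Real.hasDerivAt_sinh x).div (Real.hasDerivAt_cosh x) (Real.cosh_pos x).ne'
  have hfun : (Real.sinh / Real.cosh) = Real.tanh :=
    funext fun y => (Real.tanh_eq_sinh_div_cosh y).symm
  rw [hfun] at h
  refine h.congr_deriv ?_
  have := Real.cosh_sq_sub_sinh_sq x
  rw [← this]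
  ring
lemma mytanh_nonneg {x : ℝ} (hx : 0 ≤ x) : 0 ≤ Real.tanh x := by
  rw [Real.tanh_eq_sinh_div_cosh]
  exact div_nonneg (Real.sinh_nonneg_iff.2 hx) (Real.cosh_pos x).le

lemma mytanh_le_self {x : ℝ} (hx : 0 ≤ x) : Real.tanh x ≤ x := by
  have hmono : MonotoneOn (fun y => y - Real.tanh y) (Set.Ici 0) := by
    apply monotoneOn_of_deriv_nonneg (convex_Ici 0)
    · exact (Continuous.sub continuous_id (by
        rw [show Real.tanh = fun y => Real.sinh y / Real.cosh y from
          funext fun y => Real.tanh_eq_sinh_div_cosh y]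
        exact Real.continuous_sinh.div Real.continuous_cosh fun y => (Real.cosh_pos y).ne')).continuousOn
    · intro y _
      exact ((hasDerivAt_id' (x := y)).sub (myHasDerivAt_tanh y)).differentiableAt.differentiableWithinAt
    · intro y _
      rw [show deriv (fun y => y - Real.tanh y) y = _ from ((hasDerivAt_id' (x := y)).sub (myHasDerivAt_tanh y)).deriv]
      have h1 := Real.one_le_cosh y
      have h2 : (1:ℝ) ≤ Real.cosh y ^ 2 := by nlinarith
      have : 1 / Real.cosh y ^ 2 ≤ 1 := by
        rw [div_le_one (by nlinarith)]; exact h2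
      linarith
  have := hmono (Set.self_mem_Ici) (Set.mem_Ici.2 hx) hx
  simp only [Real.tanh_zero, sub_zero] at this
  linarith

lemma mysub_tanh_le {x : ℝ} (hx : 0 ≤ x) : x - Real.tanh x ≤ x ^ 3 := by
  have hmono : MonotoneOn (fun y => y ^ 3 - y + Real.tanh y) (Set.Ici 0) := by
    apply monotoneOn_of_deriv_nonneg (convex_Ici 0)
    · exact ((continuous_pow 3).sub continuous_id |>.add (by
        rw [show Real.tanh = fun y => Real.sinh y / Real.cosh y from
          funext fun y => Real.tanh_eq_sinh_div_cosh y]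
        exact Real.continuous_sinh.div Real.continuous_cosh fun y => (Real.cosh_pos y).ne')).continuousOn
    · intro y _
      exact (((hasDerivAt_pow 3 y).sub (hasDerivAt_id' (x := y))).add
        (myHasDerivAt_tanh y)).differentiableAt.differentiableWithinAt
    · intro y hy
      rw [interior_Ici, Set.mem_Ioi] at hy
      rw [show deriv (fun y => y ^ 3 - y + Real.tanh y) y = _ from (((hasDerivAt_pow 3 y).sub (hasDerivAt_id' (x := y))).add (myHasDerivAt_tanh y)).deriv]
      have h1 : Real.tanh y ≤ y := mytanh_le_self hy.le
      have h2 : 0 ≤ Real.tanh y := mytanh_nonneg hy.le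
      have hc : (0:ℝ) < Real.cosh y ^ 2 := by positivity
      have hid : 1 / Real.cosh y ^ 2 = 1 - Real.tanh y ^ 2 := by
        rw [Real.tanh_eq_sinh_div_cosh]
        have := Real.cosh_sq_sub_sinh_sq y
        field_simp
        linarith
      rw [hid]
      have : Real.tanh y ^ 2 ≤ y ^ 2 := by nlinarith
      norm_num
      nlinarith
  have := hmono (Set.self_mem_Ici) (Set.mem_Ici.2 hx) hx
  simp only [Real.tanh_zero, sub_zero] at this
  norm_num at this
  linarith

lemma Fsymb_bounds {μ : ℝ} (hμ : 0 ≤ μ) (ξ : ℝ) :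
    Fsymb μ ξ ≤ 1 ∧ 1 - μ * ξ ^ 2 ≤ Fsymb μ ξ ∧ 0 ≤ Fsymb μ ξ := by
  unfold Fsymb
  split_ifs with h
  · refine ⟨le_refl 1, by nlinarith [sq_nonneg ξ], zero_le_one⟩
  · push_neg at h
    obtain ⟨hμ0, hξ0⟩ := h
    have hμpos : 0 < μ := lt_of_le_of_ne hμ (Ne.symm hμ0)
    have hx : 0 < Real.sqrt μ * |ξ| :=
      mul_pos (Real.sqrt_pos.2 hμpos) (abs_pos.2 hξ0)
    set x := Real.sqrt μ * |ξ| with hxdef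
    have ht_le : Real.tanh x ≤ x := mytanh_le_self hx.le
    have htn : 0 ≤ Real.tanh x := mytanh_nonneg hx.le
    have hr1 : Real.tanh x / x ≤ 1 := (div_le_one hx).2 ht_le
    have hr0 : 0 ≤ Real.tanh x / x := div_nonneg htn hx.le
    have hF1 : Real.sqrt (Real.tanh x / x) ≤ 1 := by
      rw [show (1:ℝ) = Real.sqrt 1 from (Real.sqrt_one).symm]
      exact Real.sqrt_le_sqrt hr1
    have hFr : Real.tanh x / x ≤ Real.sqrt (Real.tanh x / x) := by
      have h1 : Real.sqrt ((Real.tanh x / x) ^ 2) ≤ Real.sqrt (Real.tanh x / x) :=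
        Real.sqrt_le_sqrt (by nlinarith)
      rwa [Real.sqrt_sq hr0] at h1
    have hx2 : x ^ 2 = μ * ξ ^ 2 := by
      rw [hxdef, mul_pow, Real.sq_sqrt hμ, sq_abs]
    have hlow : 1 - μ * ξ ^ 2 ≤ Real.tanh x / x := by
      rw [le_div_iff₀ hx]
      have := mysub_tanh_le hx.le
      nlinarith
    exact ⟨hF1, le_trans hlow hFr, Real.sqrt_nonneg _⟩

lemma Fsymb_even (μ ξ : ℝ) : Fsymb μ (-ξ) = Fsymb μ ξ := by
  simp [Fsymb, neg_eq_zero, abs_neg]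

lemma continuous_tanh : Continuous Real.tanh := by
  rw [show Real.tanh = fun y => Real.sinh y / Real.cosh y from
    funext fun y => Real.tanh_eq_sinh_div_cosh y]
  exact Real.continuous_sinh.div Real.continuous_cosh fun y => (Real.cosh_pos y).ne'

lemma continuous_Fsymb {μ : ℝ} (hμ : 0 ≤ μ) : Continuous (Fsymb μ) := by
  rcases eq_or_lt_of_le hμ with hμ0 | hμpos
  · have : Fsymb μ = fun _ => 1 := funext fun ξ => by simp [Fsymb, ← hμ0]
    rw [this]; exact continuous_const
  · rw [continuous_iff_continuousAt]
    intro ξ₀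
    by_cases hξ : ξ₀ = 0
    · subst hξ
      have hF0 : Fsymb μ 0 = 1 := by simp [Fsymb]
      unfold ContinuousAt
      rw [hF0]
      apply tendsto_of_tendsto_of_tendsto_of_le_of_le
        (g := fun ξ : ℝ => 1 - μ * ξ ^ 2) (h := fun _ : ℝ => (1:ℝ))
      · have : Filter.Tendsto (fun ξ : ℝ => 1 - μ * ξ ^ 2) (nhds 0)
            (nhds (1 - μ * (0:ℝ) ^ 2)) := by
          exact (continuous_const.sub (continuous_const.mul (continuous_pow 2))).tendsto 0
        simpa using this
      · exact tendsto_const_nhds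
      · exact fun ξ => (Fsymb_bounds hμ ξ).2.1
      · exact fun ξ => (Fsymb_bounds hμ ξ).1
    · have hcont : ContinuousAt
          (fun ξ => Real.sqrt (Real.tanh (Real.sqrt μ * |ξ|) / (Real.sqrt μ * |ξ|))) ξ₀ := by
        apply Real.continuous_sqrt.continuousAt.comp
        apply ContinuousAt.div
        · exact (continuous_tanh.comp (continuous_const.mul continuous_abs)).continuousAt
        · exact (continuous_const.mul continuous_abs).continuousAt
        · exact (mul_pos (Real.sqrt_pos.2 hμpos) (abs_pos.2 hξ)).ne'
      apply hcont.congr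
      filter_upwards [eventually_ne_nhds hξ] with ξ hξ'
      simp [Fsymb, hξ', hμpos.ne']

lemma conj_fourierIntegral (f : ℝ → ℂ) (ξ : ℝ) :
    (starRingEnd ℂ) (𝓕 f ξ) =
      𝓕 (fun x => (starRingEnd ℂ) (f x)) (-ξ) := by
  rw [Real.fourier_real_eq_integral_exp_smul,
    Real.fourier_real_eq_integral_exp_smul, ← integral_conj]
  congr 1
  funext v
  simp only [smul_eq_mul, map_mul, ← Complex.exp_conj, Complex.conj_I, map_neg, map_mul,
    Complex.conj_ofReal]
  congr 2
  push_cast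
  ring

lemma conj_fourierC (u : ℝ → ℝ) (ξ : ℝ) :
    (starRingEnd ℂ) (fourierC u ξ) = fourierC u (-ξ) := by
  rw [fourierC, conj_fourierIntegral]
  simp only [Complex.conj_ofReal]

lemma fourierC_of_not_integrable {f : ℝ → ℝ}
    (h : ¬ Integrable (fun x => (f x : ℂ)) volume) : fourierC f = 0 := by
  funext ξ
  rw [fourierC, Real.fourier_real_eq]
  refine integral_undef fun hI => h ?_
  exact (Real.fourierIntegral_convergent_iff ξ).1 (by simpa only [Real.inner_apply] using hI)

lemma fourierIntegralInv_zero' (x : ℝ) :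
    𝓕⁻ (fun _ : ℝ => (0:ℂ)) x = 0 := by
  rw [Real.fourierInv_eq]
  simp

lemma HNorm_zero_of_fourierC_eq_zero {α : ℝ} {v : ℝ → ℝ} (h : fourierC v = 0) :
    HNorm α v = 0 := by
  rw [HNorm, h]
  simp [eLpNorm_zero']


theorem statement2 (μmax : ℝ) (hμmax : 0 < μmax) :
    ∃ C : ℝ, 0 < C ∧
      ∀ μ ∈ Set.Icc (0:ℝ) μmax, ∀ α : ℝ, 0 ≤ α → ∀ u : ℝ → ℝ,
        HNorm (α + 2) u ≠ ⊤ →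
        HNorm α (fun x => fourierMul (Fsymb μ) u x - u x)
          ≤ ENNReal.ofReal (C * μ) * HNorm (α + 2) u := by
  refine ⟨1, one_pos, ?_⟩
  rintro μ ⟨hμ0, -⟩ α hα u hu
  by_cases hu1 : Integrable (fun x => (u x : ℂ)) volume
  · -- main case
      have hFcont : Continuous (Fsymb μ) := continuous_Fsymb hμ0
      have hure : Integrable u volume := by
        have := hu1.re; simpa using this
      have hUc : Continuous (fourierC u) :=
        VectorFourier.fourierIntegral_continuous (L := innerₗ ℝ) Real.continuous_fourierChar
          (by exact continuous_inner) hu1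
      -- Step 1 : fourierC u is integrable (Cauchy-Schwarz with the weight)
      set ψ : ℝ → ℝ := fun ξ => (1 + ξ ^ 2) ^ ((α + 2) / 2) with hψdef
      have hψpos : ∀ ξ, 0 < ψ ξ := fun ξ => Real.rpow_pos_of_pos (by positivity) _
      have hψcont : Continuous ψ :=
        (continuous_const.add (continuous_pow 2)).rpow_const fun ξ => Or.inl (by show (1:ℝ) + ξ ^ 2 ≠ 0; positivity)
      have hψge : ∀ ξ, 1 + ξ ^ 2 ≤ ψ ξ := by
        intro ξ
        have h1 : (1 + ξ ^ 2 : ℝ) = (1 + ξ ^ 2) ^ (1:ℝ) := (Real.rpow_one _).symm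
        rw [h1, hψdef]
        exact Real.rpow_le_rpow_of_exponent_le (by nlinarith [sq_nonneg ξ]) (by linarith)
      have hMem2 : MemLp (fun ξ => ψ ξ * ‖fourierC u ξ‖) 2 volume :=
        ⟨(hψcont.mul hUc.norm).aestronglyMeasurable, lt_of_le_of_ne le_top hu⟩
      have hφMem : MemLp (fun ξ => (ψ ξ)⁻¹) 2 volume := by
        refine (memLp_two_iff_integrable_sq
          ((hψcont.inv₀ fun ξ => (hψpos ξ).ne').aestronglyMeasurable)).2 ?_
        apply integrable_inv_one_add_sq.mono
          ((hψcont.inv₀ fun ξ => (hψpos ξ).ne').pow 2).aestronglyMeasurable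
        filter_upwards with ξ
        have h1 : (1 + ξ ^ 2 : ℝ) ≤ ψ ξ := hψge ξ
        have h2 : (0:ℝ) < 1 + ξ ^ 2 := by positivity
        have h3 : (ψ ξ)⁻¹ ≤ (1 + ξ ^ 2)⁻¹ := by
          apply inv_anti₀ h2 h1
        have h4 : (0:ℝ) ≤ (ψ ξ)⁻¹ := (inv_nonneg).2 (hψpos ξ).le
        have h5 : (1 + ξ ^ 2 : ℝ)⁻¹ ≤ 1 := by
          rw [inv_le_one_iff₀]; right; nlinarith
        rw [Real.norm_eq_abs, Real.norm_eq_abs, Pi.pow_apply, Pi.inv_apply, _root_.abs_of_nonneg (by positivity : (0:ℝ) ≤ (ψ ξ)⁻¹ ^ 2),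
          _root_.abs_of_nonneg (by positivity : (0:ℝ) ≤ (1 + ξ ^ 2)⁻¹)]
        nlinarith
      have hprod : MemLp (fun ξ => (ψ ξ)⁻¹ • (ψ ξ * ‖fourierC u ξ‖)) 1 volume :=
        haveI : ENNReal.HolderTriple 2 2 1 := ⟨by rw [inv_one]; exact ENNReal.inv_two_add_inv_two⟩
        hMem2.smul hφMem
      have hprodeq : (fun ξ => (ψ ξ)⁻¹ • (ψ ξ * ‖fourierC u ξ‖))
          = fun ξ => ‖fourierC u ξ‖ := by
        funext ξ
        rw [smul_eq_mul, ← mul_assoc, inv_mul_cancel₀ (hψpos ξ).ne', one_mul]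
      have hU1 : Integrable (fourierC u) volume := by
        rw [← integrable_norm_iff hUc.aestronglyMeasurable]
        exact memLp_one_iff_integrable.1 (hprodeq ▸ hprod)
      -- Step 2 : the multiplied symbol
      set G : ℝ → ℂ := fun ξ => ((Fsymb μ ξ : ℝ) : ℂ) * fourierC u ξ with hGdef
      have hG1 : Integrable G volume := by
        apply hU1.bdd_mul (c := 1) ((Complex.continuous_ofReal.comp hFcont).aestronglyMeasurable)
        refine Filter.Eventually.of_forall fun ξ => ?_
        show ‖((Fsymb μ ξ : ℝ) : ℂ)‖ ≤ 1
        rw [Complex.norm_real, Real.norm_eq_abs,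
          _root_.abs_of_nonneg (Fsymb_bounds hμ0 ξ).2.2]
        exact (Fsymb_bounds hμ0 ξ).1
      have hGc : Continuous G := (Complex.continuous_ofReal.comp hFcont).mul hUc
      set w : ℝ → ℂ := 𝓕⁻ G with hwdef
      -- Step 3 : w is real-valued
      have hwconj : ∀ x, (starRingEnd ℂ) (w x) = w x := by
        intro x
        rw [hwdef, Real.fourierInv_eq_fourier_neg, conj_fourierIntegral, neg_neg]
        have hGconj : (fun ξ => (starRingEnd ℂ) (G ξ)) = fun ξ => G (-ξ) := by
          funext ξ
          rw [hGdef]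
          simp only [map_mul, Complex.conj_ofReal, conj_fourierC, Fsymb_even]
        rw [hGconj, ← Real.fourierInv_eq_fourier_comp_neg]
        exact Real.fourierInv_eq_fourier_neg G x
      have hwre : ∀ x, ((w x).re : ℂ) = w x := fun x => Complex.conj_eq_iff_re.1 (hwconj x)
      -- Step 4 : case on integrability of the difference
      by_cases hv1 : Integrable (fun x => (w x).re - u x) volume
      · have hRew : Integrable (fun x => (w x).re) volume := by
          have h7 := hv1.add hure
          rw [show ((fun x => (w x).re - u x) + u) = fun x => (w x).re from
            funext fun x => by simp] at h7
          exact h7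
        have hwc : Continuous w := by
          rw [hwdef, Real.fourierInv_eq_fourier_comp_neg]
          exact VectorFourier.fourierIntegral_continuous (L := innerₗ ℝ) Real.continuous_fourierChar
            (by exact continuous_inner) hG1.comp_neg
        have hw1 : Integrable w volume := by
          rw [← integrable_norm_iff hwc.aestronglyMeasurable]
          rw [show (fun x => ‖w x‖) = fun x => |(w x).re| from funext fun x => by
            rw [← hwre x, Complex.norm_real, Real.norm_eq_abs]; simp]
          exact hRew.abs
        have hFG : Integrable (𝓕 G : ℝ → ℂ) volume := by
          have h3 : Integrable (fun x => w (-x)) volume := hw1.comp_neg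
          have h4 : (fun x => w (-x)) = (𝓕 G : ℝ → ℂ) := by
            funext x
            rw [hwdef, Real.fourierInv_eq_fourier_neg, neg_neg]
          rwa [h4] at h3
        have hinv : (𝓕 w : ℝ → ℂ) = G := by
          rw [hwdef]
          exact hGc.fourier_fourierInv_eq hG1 hFG
        -- Step 5 : compute the Fourier transform of the difference
        have hfc : fourierC (fun x => fourierMul (Fsymb μ) u x - u x)
            = fun ξ => ((Fsymb μ ξ - 1 : ℝ) : ℂ) * fourierC u ξ := by
          have hmuleq : fourierMul (Fsymb μ) u = fun x => (w x).re := rfl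
          funext ξ
          rw [hmuleq, fourierC, Real.fourier_real_eq]
          have hcast : ∀ x : ℝ, (((w x).re - u x : ℝ) : ℂ) = w x - ((u x : ℝ) : ℂ) := by
            intro x
            push_cast
            rw [hwre x]
          simp_rw [hcast, smul_sub]
          have hiw : Integrable (fun v : ℝ => 𝐞 (-(v * ξ)) • w v) volume :=
            by simpa only [Real.inner_apply] using (Real.fourierIntegral_convergent_iff ξ).2 hw1
          have hiu : Integrable (fun v : ℝ => 𝐞 (-(v * ξ)) • ((u v : ℝ) : ℂ)) volume :=
            by simpa only [Real.inner_apply] using (Real.fourierIntegral_convergent_iff ξ).2 hu1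
          rw [integral_sub hiw hiu]
          have h5 : ∫ x : ℝ, 𝐞 (-(x * ξ)) • w x = 𝓕 w ξ :=
            (Real.fourier_real_eq w ξ).symm
          have h6 : ∫ x : ℝ, 𝐞 (-(x * ξ)) • ((u x : ℝ) : ℂ) = fourierC u ξ :=
            (Real.fourier_real_eq _ ξ).symm
          rw [h5, h6, hinv]
          simp only [hGdef]
          push_cast
          ring
        -- Step 6 : the norm estimate
        rw [HNorm, hfc]
        have hmono : ∀ ξ : ℝ, ‖(1 + ξ ^ 2) ^ (α / 2) * ‖((Fsymb μ ξ - 1 : ℝ) : ℂ) * fourierC u ξ‖‖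
            ≤ ‖(μ • fun ξ : ℝ => ψ ξ * ‖fourierC u ξ‖) ξ‖ := by
          intro ξ
          have hb := Fsymb_bounds hμ0 ξ
          have hsym : |Fsymb μ ξ - 1| ≤ μ * (1 + ξ ^ 2) := by
            rw [abs_le]
            constructor
            · nlinarith [hb.2.1]
            · nlinarith [hb.1, sq_nonneg ξ, hμ0]
          have hA : (0:ℝ) ≤ (1 + ξ ^ 2) ^ (α / 2) := Real.rpow_nonneg (by positivity) _
          have hn : (0:ℝ) ≤ ‖fourierC u ξ‖ := norm_nonneg _
          have hexp : ψ ξ = (1 + ξ ^ 2) ^ (α / 2) * (1 + ξ ^ 2) := by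
            simp only [hψdef]
            rw [show (α + 2) / 2 = α / 2 + 1 by ring,
              Real.rpow_add (by positivity), Real.rpow_one]
          have h1pos : (0:ℝ) < 1 + ξ ^ 2 := by positivity
          rw [Pi.smul_apply, smul_eq_mul, Real.norm_eq_abs, Real.norm_eq_abs,
            _root_.abs_of_nonneg (by positivity :
              (0:ℝ) ≤ (1 + ξ ^ 2) ^ (α / 2) * ‖((Fsymb μ ξ - 1 : ℝ) : ℂ) * fourierC u ξ‖),
            _root_.abs_of_nonneg (by
              have := hψpos ξ
              positivity : (0:ℝ) ≤ μ * (ψ ξ * ‖fourierC u ξ‖)),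
            norm_mul, Complex.norm_real, Real.norm_eq_abs, hexp]
          calc (1 + ξ ^ 2) ^ (α / 2) * (|Fsymb μ ξ - 1| * ‖fourierC u ξ‖)
              ≤ (1 + ξ ^ 2) ^ (α / 2) * ((μ * (1 + ξ ^ 2)) * ‖fourierC u ξ‖) := by
                apply mul_le_mul_of_nonneg_left (mul_le_mul_of_nonneg_right hsym hn) hA
            _ = μ * ((1 + ξ ^ 2) ^ (α / 2) * (1 + ξ ^ 2) * ‖fourierC u ξ‖) := by ring
        calc eLpNorm (fun ξ : ℝ => (1 + ξ ^ 2) ^ (α / 2)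
                * ‖((Fsymb μ ξ - 1 : ℝ) : ℂ) * fourierC u ξ‖) 2 volume
            ≤ eLpNorm (μ • fun ξ : ℝ => ψ ξ * ‖fourierC u ξ‖) 2 volume := eLpNorm_mono hmono
          _ = ‖μ‖ₑ * eLpNorm (fun ξ : ℝ => ψ ξ * ‖fourierC u ξ‖) 2 volume :=
              eLpNorm_const_smul μ _ 2 volume
          _ = ENNReal.ofReal (1 * μ) * HNorm (α + 2) u := by
              rw [Real.enorm_eq_ofReal hμ0, one_mul]
              rfl
      · -- the difference is not integrable : its Fourier transform is identically 0
        have hzero : HNorm α (fun x => fourierMul (Fsymb μ) u x - u x) = 0 := by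
          apply HNorm_zero_of_fourierC_eq_zero
          apply fourierC_of_not_integrable
          intro hI
          apply hv1
          have h2 : (fun x => (((w x).re - u x : ℝ) : ℂ)) = fun x => w x - ((u x : ℝ) : ℂ) := by
            funext x; push_cast; rw [hwre x]
          have hI' : Integrable (fun x => (((fourierMul (Fsymb μ) u) x - u x : ℝ) : ℂ)) volume := hI
          have := hI'.re
          exact (by simpa using this : Integrable (fun x => fourierMul (Fsymb μ) u x - u x) volume)
        rw [hzero]
        exact bot_le
  · -- junk case : everything is zero
    have h0 : fourierC u = 0 := fourierC_of_not_integrable hu1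
    have hmul : fourierMul (Fsymb μ) u = fun _ => 0 := by
      funext x
      rw [fourierMul, h0]
      have : (fun ξ : ℝ => ((Fsymb μ ξ : ℝ) : ℂ) * (0 : ℝ → ℂ) ξ) = fun _ : ℝ => (0:ℂ) := by
        funext ξ; simp
      rw [this, fourierIntegralInv_zero']
      simp
    have hni : ¬ Integrable (fun x => ((0 - u x : ℝ) : ℂ)) volume := by
      intro hI
      apply hu1
      have h2 : (fun x => ((0 - u x : ℝ) : ℂ)) = fun x => -((u x : ℝ) : ℂ) := by
        funext x; push_cast; ring
      rw [h2] at hI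
      have h3 : (fun x => -((u x : ℝ) : ℂ)) = -(fun x => ((u x : ℝ) : ℂ)) := rfl
      rw [h3, integrable_neg_iff] at hI
      exact hI
    have hzero : HNorm α (fun x => fourierMul (Fsymb μ) u x - u x) = 0 := by
      rw [hmul]
      exact HNorm_zero_of_fourierC_eq_zero (fourierC_of_not_integrable hni)
    rw [hzero]
    exact bot_le
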